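/- Let R be a commutative ring with 1 and let τ be a symmetric relation on the set R^# of nonzero nonunits of R. If τ is divisive, then τ is refinable: every τ-refinement of a τ-factorization is again a τ-factorization. -/

import Mathlib

universe u

variable {R : Type u} [CommRing R]

/-- `a ∈ R^#`, i.e. `a` is a nonzero nonunit of `R`. -/
def IsNnu (a : R) : Prop :=
  a ≠ 0 ∧ ¬IsUnit a

/-- `a ∼ b` iff `(a) = (b)`. -/
def RAssoc (a b : R) : Prop :=
  Ideal.span ({a} : Set R) = Ideal.span ({b} : Set R)

/-- `a ≈ b` iff `a = λ * b` for some unit `λ`. -/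
def RSAssoc (a b : R) : Prop :=
  ∃ lam : Rˣ, a = (lam : R) * b

/-- `a ≅ b` iff `a ∼ b` and (`a = b = 0`, or whenever `a = r * b` then `r` is a unit). -/
def RVSAssoc (a b : R) : Prop :=
  RAssoc a b ∧ ((a = 0 ∧ b = 0) ∨ ∀ r : R, a = r * b → IsUnit r)

/-- `a = u * a₁ ⋯ aₙ` (with `l = [a₁, …, aₙ]`) is a `τ`-factorization of `a`:
the list of factors is nonempty, all factors are nonunits, all factors are nonzero
except in the trivial `τ`-factorization `0 = u * 0` of `0`, and the factors are
pairwise related by `τ`. -/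
def IsTauFact (τ : R → R → Prop) (u : Rˣ) (l : List R) (a : R) : Prop :=
  l ≠ [] ∧ (∀ x ∈ l, ¬IsUnit x) ∧ (∀ x ∈ l, x = 0 → l = [0]) ∧
    l.Pairwise τ ∧ a = (u : R) * l.prod

/-- `b` τ-divides `a`, i.e. `b` occurs as a factor in some τ-factorization of `a`. -/
def TauDvd (τ : R → R → Prop) (b a : R) : Prop :=
  ∃ (u : Rˣ) (l : List R), IsTauFact τ u l a ∧ b ∈ l

/-- `a` is τ-irreducible: `a` is a nonunit and every τ-factorization of `a`
has a factor `∼ a`. -/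
def TauIrreducible (τ : R → R → Prop) (a : R) : Prop :=
  ¬IsUnit a ∧ ∀ (u : Rˣ) (l : List R), IsTauFact τ u l a → ∃ x ∈ l, RAssoc a x

/-- `a` is τ-strongly irreducible: `a` is a nonunit and every τ-factorization of `a`
has a factor `≈ a`. -/
def TauSIrreducible (τ : R → R → Prop) (a : R) : Prop :=
  ¬IsUnit a ∧ ∀ (u : Rˣ) (l : List R), IsTauFact τ u l a → ∃ x ∈ l, RSAssoc a x

/-- `a` is τ-m-irreducible: `a` is a nonunit and in every τ-factorization of `a`
every factor is `∼ a`. -/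
def TauMIrreducible (τ : R → R → Prop) (a : R) : Prop :=
  ¬IsUnit a ∧ ∀ (u : Rˣ) (l : List R), IsTauFact τ u l a → ∀ x ∈ l, RAssoc a x

/-- `a` is τ-very strongly irreducible: `a` is a nonunit, `a ≅ a`, and `a` has
no nontrivial τ-factorizations. -/
def TauVSIrreducible (τ : R → R → Prop) (a : R) : Prop :=
  ¬IsUnit a ∧ RVSAssoc a a ∧ ∀ (u : Rˣ) (l : List R), IsTauFact τ u l a → l.length = 1

/-- `R` is τ-atomic: every nonunit has a τ-factorization into τ-irreducible factors. -/
def TauAtomic (τ : R → R → Prop) : Prop :=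
  ∀ a : R, ¬IsUnit a → ∃ (u : Rˣ) (l : List R),
    IsTauFact τ u l a ∧ ∀ x ∈ l, TauIrreducible τ x

/-- `τ` is refinable: replacing each factor of a τ-factorization by the factors of a
τ-factorization of it (absorbing the units into the leading unit) again yields a
τ-factorization. -/
def TauRefinable (τ : R → R → Prop) : Prop :=
  ∀ (a : R) (u : Rˣ) (l : List R), IsTauFact τ u l a →
    ∀ L : List (Rˣ × List R),
      List.Forall₂ (fun x p => IsTauFact τ p.1 p.2 x) l L →
      IsTauFact τ (u * (L.map Prod.fst).prod) (L.map Prod.snd).flatten a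

/-- `τ` is associate preserving. -/
def TauAssocPreserving (τ : R → R → Prop) : Prop :=
  ∀ a b b' : R, IsNnu b' → RAssoc b b' → τ a b → τ a b'

/-- `R` satisfies τ-ACCP: every ascending chain of principal ideals
`(a₀) ⊆ (a₁) ⊆ ⋯` with `a_{i+1} |_τ a_i` stabilizes. -/
def TauACCP (τ : R → R → Prop) : Prop :=
  ∀ f : ℕ → R,
    (∀ i, Ideal.span ({f i} : Set R) ≤ Ideal.span ({f (i + 1)} : Set R)) →
    (∀ i, TauDvd τ (f (i + 1)) (f i)) →
    ∃ N : ℕ, ∀ i, N ≤ i → Ideal.span ({f i} : Set R) = Ideal.span ({f N} : Set R)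


private lemma forall₂_mem_right {α β : Type*} {r : α → β → Prop} :
    ∀ {l : List α} {L : List β}, List.Forall₂ r l L → ∀ q ∈ L, ∃ y ∈ l, r y q := by
  intro l L h
  induction h with
  | nil => simp
  | cons hxy _ ih =>
    intro q hq
    rw [List.mem_cons] at hq
    rcases hq with rfl | hq
    · exact ⟨_, List.mem_cons_self, hxy⟩
    · obtain ⟨y, hy, hr⟩ := ih q hq
      exact ⟨y, List.mem_cons_of_mem _ hy, hr⟩

private lemma prod_eq_aux {l : List R} {L : List (Rˣ × List R)}
    (h : List.Forall₂ (fun (x : R) (p : Rˣ × List R) => x = (p.1 : R) * p.2.prod) l L) :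
    l.prod = ((L.map Prod.fst).prod : Rˣ) * (L.map Prod.snd).flatten.prod := by
  induction h with
  | nil => simp
  | cons hxy _ ih =>
    simp only [List.map_cons, List.prod_cons, List.flatten_cons, List.prod_append, ih, hxy,
      Units.val_mul]
    ring

private lemma pairwise_aux {τ : R → R → Prop}
    (hsym : ∀ a b : R, τ a b → τ b a)
    (hdiv : ∀ a b b' : R, IsNnu b' → τ a b → b' ∣ b → τ a b') :
    ∀ {l : List R} {L : List (Rˣ × List R)},
      List.Forall₂ (fun (x : R) (p : Rˣ × List R) => IsTauFact τ p.1 p.2 x) l L →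
      l.Pairwise τ →
      (∀ b ∈ (L.map Prod.snd).flatten, IsNnu b) →
      (L.map Prod.snd).Pairwise (fun s t => ∀ b ∈ s, ∀ c ∈ t, τ b c) := by
  intro l L h
  induction h with
  | nil => simp
  | @cons x p l' L' hxp hl'L' ih =>
    intro hpw hnnu
    rw [List.pairwise_cons] at hpw
    obtain ⟨hhead, htail⟩ := hpw
    simp only [List.map_cons, List.flatten_cons] at hnnu ⊢
    refine List.Pairwise.cons ?_ (ih htail fun b hb => hnnu b (List.mem_append_right _ hb))
    intro t ht b hb c hc
    obtain ⟨q, hqL, rfl⟩ := List.mem_map.1 ht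
    obtain ⟨y, hy, hfy⟩ := forall₂_mem_right hl'L' q hqL
    have hxy : τ x y := hhead y hy
    have hbx : b ∣ x := by
      rw [hxp.2.2.2.2]
      exact Dvd.dvd.mul_left (List.dvd_prod hb) _
    have hcy : c ∣ y := by
      rw [hfy.2.2.2.2]
      exact Dvd.dvd.mul_left (List.dvd_prod hc) _
    have hcnnu : IsNnu c :=
      hnnu c (List.mem_append_right _ (List.mem_flatten.2 ⟨q.2, List.mem_map_of_mem hqL, hc⟩))
    have hbnnu : IsNnu b := hnnu b (List.mem_append_left _ hb)
    exact hsym _ _ (hdiv c x b hbnnu (hsym _ _ (hdiv x y c hcnnu hxy hcy)) hbx)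

/-- If `τ` (a symmetric relation on `R^#`) is divisive, then `τ` is refinable:
every τ-refinement of a τ-factorization is again a τ-factorization. -/
theorem divisive_implies_refinable (τ : R → R → Prop)
    (hτ : ∀ a b : R, τ a b → IsNnu a ∧ IsNnu b)
    (hsym : ∀ a b : R, τ a b → τ b a)
    (hdiv : ∀ a b b' : R, IsNnu b' → τ a b → b' ∣ b → τ a b') :
    ∀ (a : R) (u : Rˣ) (l : List R), IsTauFact τ u l a →
      ∀ L : List (Rˣ × List R),
        List.Forall₂ (fun x p => IsTauFact τ p.1 p.2 x) l L →
        IsTauFact τ (u * (L.map Prod.fst).prod) (L.map Prod.snd).flatten a := by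
  intro a u l hfact L hL
  obtain ⟨hne, hnu, hzero, hpw, heq⟩ := hfact
  have hL' : List.Forall₂ (fun (x : R) (p : Rˣ × List R) => x = (p.1 : R) * p.2.prod) l L :=
    hL.imp fun _ _ h => h.2.2.2.2
  have hmem : ∀ b ∈ (L.map Prod.snd).flatten,
      ∃ p ∈ L, ∃ x ∈ l, IsTauFact τ p.1 p.2 x ∧ b ∈ p.2 := by
    intro b hb
    obtain ⟨t, ht, hbt⟩ := List.mem_flatten.1 hb
    obtain ⟨q, hq, rfl⟩ := List.mem_map.1 ht
    obtain ⟨y, hy, hfy⟩ := forall₂_mem_right hL q hq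
    exact ⟨q, hq, y, hy, hfy, hbt⟩
  have hLne : L ≠ [] := by
    rintro rfl
    rw [List.forall₂_nil_right_iff] at hL
    exact hne hL
  have hzero' : ∀ b ∈ (L.map Prod.snd).flatten, b = 0 → (L.map Prod.snd).flatten = [0] := by
    intro b hb hb0
    subst hb0
    obtain ⟨p, hp, x, hx, hfx, hbp⟩ := hmem 0 hb
    have hp2 : p.2 = [0] := hfx.2.2.1 0 hbp rfl
    have hx0 : x = 0 := by rw [hfx.2.2.2.2, hp2]; simp
    have hl0 : l = [0] := hzero x hx hx0
    subst hl0
    rcases List.forall₂_cons_left_iff.1 hL with ⟨q, L', hq0, hL'', rfl⟩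
    rw [List.forall₂_nil_left_iff] at hL''
    subst hL''
    simp only [List.map_cons, List.map_nil, List.flatten_cons, List.flatten_nil,
      List.append_nil] at hb ⊢
    exact hq0.2.2.1 0 hb rfl
  refine ⟨?_, ?_, hzero', ?_, ?_⟩
  · intro h
    obtain ⟨q, hq⟩ := List.exists_mem_of_ne_nil L hLne
    obtain ⟨y, _, hfy⟩ := forall₂_mem_right hL q hq
    exact hfy.1 (List.flatten_eq_nil_iff.1 h q.2 (List.mem_map_of_mem hq))
  · intro b hb
    obtain ⟨p, hp, x, hx, hfx, hbp⟩ := hmem b hb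
    exact hfx.2.1 b hbp
  · by_cases h0 : (0 : R) ∈ (L.map Prod.snd).flatten
    · rw [hzero' 0 h0 rfl]
      simp
    · refine List.pairwise_flatten.2 ⟨?_, ?_⟩
      · intro s hs
        obtain ⟨q, hq, rfl⟩ := List.mem_map.1 hs
        obtain ⟨y, _, hfy⟩ := forall₂_mem_right hL q hq
        exact hfy.2.2.2.1
      · refine pairwise_aux hsym hdiv hL hpw ?_
        intro b hb
        refine ⟨?_, ?_⟩
        · rintro rfl; exact h0 hb
        · obtain ⟨p, hp, x, hx, hfx, hbp⟩ := hmem b hb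
          exact hfx.2.1 b hbp
  · rw [heq, prod_eq_aux hL']
    push_cast
    ring
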